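/- Let M = (m_{ij}) be a 4×4 centrosymmetric Markov matrix such that M = exp(Q) for some 4×4 centrosymmetric rate matrix Q. Then (m22 - m23)(m11 - m14) > (m24 - m21)(m13 - m12). -/

import Mathlib

open Matrix

set_option maxHeartbeats 1000000

/-- A Markov matrix: nonnegative entries, rows summing to one. -/
def IsMarkov {n : ℕ} (M : Matrix (Fin n) (Fin n) ℝ) : Prop :=
  (∀ i j, 0 ≤ M i j) ∧ ∀ i, ∑ j, M i j = 1

/-- A rate matrix: nonnegative off-diagonal entries, rows summing to zero. -/
def IsRate {n : ℕ} (Q : Matrix (Fin n) (Fin n) ℝ) : Prop :=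
  (∀ i j, i ≠ j → 0 ≤ Q i j) ∧ ∀ i, ∑ j, Q i j = 0

/-- Centrosymmetry: entrywise symmetry about the center of the matrix. -/
def IsCentrosymmetric {n : ℕ} (A : Matrix (Fin n) (Fin n) ℝ) : Prop :=
  ∀ i j, A i j = A i.rev j.rev

/-- The reindexing equivalence sending block-diagonal coordinates `(i, k)` to `2k + i`. -/
def e4 : Fin 2 × Fin 2 ≃ Fin 4 where
  toFun p := ⟨2 * p.2.val + p.1.val, by omega⟩
  invFun j := (⟨j.val % 2, by omega⟩, ⟨j.val / 2, by omega⟩)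
  left_inv := by decide
  right_inv := by decide

/-- `exp` commutes with reindexing. -/
theorem exp_reindex {n m : Type*} [Fintype n] [DecidableEq n] [Fintype m] [DecidableEq m]
    (e : n ≃ m) (A : Matrix n n ℝ) :
    NormedSpace.exp (Matrix.reindexAlgEquiv ℝ ℝ e A)
      = Matrix.reindexAlgEquiv ℝ ℝ e (NormedSpace.exp A) := by
  letI : SeminormedRing (Matrix n n ℝ) := Matrix.linftyOpSemiNormedRing
  letI : NormedRing (Matrix n n ℝ) := Matrix.linftyOpNormedRing
  letI : NormedAlgebra ℝ (Matrix n n ℝ) := Matrix.linftyOpNormedAlgebra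
  letI : SeminormedRing (Matrix m m ℝ) := Matrix.linftyOpSemiNormedRing
  letI : NormedRing (Matrix m m ℝ) := Matrix.linftyOpNormedRing
  letI : NormedAlgebra ℝ (Matrix m m ℝ) := Matrix.linftyOpNormedAlgebra
  letI : NormedAlgebra ℚ (Matrix n n ℝ) := Matrix.linftyOpNormedAlgebra
  letI : NormedAlgebra ℚ (Matrix m m ℝ) := Matrix.linftyOpNormedAlgebra
  have hc : Continuous (Matrix.reindexAlgEquiv ℝ ℝ e) :=
    LinearMap.continuous_of_finiteDimensional
      (Matrix.reindexAlgEquiv ℝ ℝ e).toLinearMap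
  exact (NormedSpace.map_exp (Matrix.reindexAlgEquiv ℝ ℝ e) hc A).symm

/-- The exponential of a real square matrix has positive determinant. -/
theorem det_exp_pos {n : Type*} [Fintype n] [DecidableEq n] (B : Matrix n n ℝ) :
    0 < (NormedSpace.exp B).det := by
  have h : NormedSpace.exp B
      = NormedSpace.exp ((2⁻¹ : ℝ) • B) * NormedSpace.exp ((2⁻¹ : ℝ) • B) := by
    rw [← Matrix.exp_add_of_commute _ _ (Commute.refl _), ← add_smul]
    norm_num
  have hu : IsUnit (NormedSpace.exp ((2⁻¹ : ℝ) • B)).det :=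
    (Matrix.isUnit_iff_isUnit_det _).mp (Matrix.isUnit_exp _)
  have hne : (NormedSpace.exp ((2⁻¹ : ℝ) • B)).det ≠ 0 := hu.ne_zero
  rw [h, Matrix.det_mul]
  exact mul_self_pos.mpr hne

/-- A 4×4 centrosymmetric Markov matrix with a centrosymmetric Markov generator satisfies
`(m22 - m23)(m11 - m14) > (m24 - m21)(m13 - m12)`. -/
theorem det_lower_block_pos
    (m11 m12 m13 m14 m21 m22 m23 m24 : ℝ)
    (M : Matrix (Fin 4) (Fin 4) ℝ)
    (hMdef : M = !![m11, m12, m13, m14; m21, m22, m23, m24;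
                    m24, m23, m22, m21; m14, m13, m12, m11])
    (hM : IsMarkov M)
    (Q : Matrix (Fin 4) (Fin 4) ℝ)
    (hQcs : IsCentrosymmetric Q) (hQ : IsRate Q)
    (hexp : NormedSpace.exp Q = M) :
    (m24 - m21) * (m13 - m12) < (m22 - m23) * (m11 - m14) := by
  subst hMdef
  -- the conjugating matrix and its inverse
  set S : Matrix (Fin 4) (Fin 4) ℝ :=
    !![1,0,0,1; 0,1,1,0; 0,1,-1,0; 1,0,0,-1] with hS
  set Si : Matrix (Fin 4) (Fin 4) ℝ :=
    !![1/2,0,0,1/2; 0,1/2,1/2,0; 0,1/2,-1/2,0; 1/2,0,0,-1/2] with hSi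
  have hSSi : S * Si = 1 := by
    ext i j
    fin_cases i <;> fin_cases j <;>
      simp [hS, hSi, Matrix.mul_apply, Fin.sum_univ_four, Matrix.one_apply] <;> norm_num
  have hSiS : Si * S = 1 := by
    ext i j
    fin_cases i <;> fin_cases j <;>
      simp [hS, hSi, Matrix.mul_apply, Fin.sum_univ_four, Matrix.one_apply] <;> norm_num
  set u : (Matrix (Fin 4) (Fin 4) ℝ)ˣ := ⟨S, Si, hSSi, hSiS⟩ with hu
  -- the blocks
  set A2 : Matrix (Fin 2) (Fin 2) ℝ :=
    !![Q 0 0 + Q 0 3, Q 0 1 + Q 0 2; Q 1 0 + Q 1 3, Q 1 1 + Q 1 2] with hA2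
  set B2 : Matrix (Fin 2) (Fin 2) ℝ :=
    !![Q 1 1 - Q 1 2, Q 1 0 - Q 1 3; Q 0 1 - Q 0 2, Q 0 0 - Q 0 3] with hB2
  set v : Fin 2 → Matrix (Fin 2) (Fin 2) ℝ := ![A2, B2] with hv
  -- the conjugated generator is block diagonal
  have hconj : (↑u⁻¹ : Matrix (Fin 4) (Fin 4) ℝ) * Q * (↑u : Matrix (Fin 4) (Fin 4) ℝ)
      = Matrix.reindexAlgEquiv ℝ ℝ e4 (Matrix.blockDiagonal v) := by
    have h20 : Q 2 0 = Q 1 3 := by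
      have h := hQcs 2 0
      rwa [show ((2:Fin 4).rev) = 1 by decide, show ((0:Fin 4).rev) = 3 by decide] at h
    have h21 : Q 2 1 = Q 1 2 := by
      have h := hQcs 2 1
      rwa [show ((2:Fin 4).rev) = 1 by decide, show ((1:Fin 4).rev) = 2 by decide] at h
    have h22 : Q 2 2 = Q 1 1 := by
      have h := hQcs 2 2
      rwa [show ((2:Fin 4).rev) = 1 by decide] at h
    have h23 : Q 2 3 = Q 1 0 := by
      have h := hQcs 2 3
      rwa [show ((2:Fin 4).rev) = 1 by decide, show ((3:Fin 4).rev) = 0 by decide] at h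
    have h30 : Q 3 0 = Q 0 3 := by
      have h := hQcs 3 0
      rwa [show ((3:Fin 4).rev) = 0 by decide, show ((0:Fin 4).rev) = 3 by decide] at h
    have h31 : Q 3 1 = Q 0 2 := by
      have h := hQcs 3 1
      rwa [show ((3:Fin 4).rev) = 0 by decide, show ((1:Fin 4).rev) = 2 by decide] at h
    have h32 : Q 3 2 = Q 0 1 := by
      have h := hQcs 3 2
      rwa [show ((3:Fin 4).rev) = 0 by decide, show ((2:Fin 4).rev) = 1 by decide] at h
    have h33 : Q 3 3 = Q 0 0 := by
      have h := hQcs 3 3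
      rwa [show ((3:Fin 4).rev) = 0 by decide] at h
    have e0 : e4.symm 0 = (0, 0) := by decide
    have e1 : e4.symm 1 = (1, 0) := by decide
    have e2 : e4.symm 2 = (0, 1) := by decide
    have e3 : e4.symm 3 = (1, 1) := by decide
    ext i j
    fin_cases i <;> fin_cases j <;>
      simp [hu, hS, hSi, hv, hA2, hB2, Matrix.mul_apply, Matrix.vecMul, dotProduct,
        Fin.sum_univ_four, Matrix.reindexAlgEquiv_apply, Matrix.reindex_apply,
        Matrix.submatrix_apply, e0, e1, e2, e3,
        Matrix.blockDiagonal_apply, h20, h21, h22, h23, h30, h31, h32, h33] <;>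
      ring
  -- exponentiate
  have hmain := Matrix.exp_units_conj' u Q
  rw [hconj, hexp, exp_reindex, Matrix.exp_blockDiagonal] at hmain
  -- exp of the pi-type function is componentwise
  have hpi : NormedSpace.exp v = ![NormedSpace.exp A2, NormedSpace.exp B2] := by
    letI : SeminormedRing (Matrix (Fin 2) (Fin 2) ℝ) := Matrix.linftyOpSemiNormedRing
    letI : NormedRing (Matrix (Fin 2) (Fin 2) ℝ) := Matrix.linftyOpNormedRing
    letI : NormedAlgebra ℝ (Matrix (Fin 2) (Fin 2) ℝ) := Matrix.linftyOpNormedAlgebra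
    letI : NormedAlgebra ℚ (Matrix (Fin 2) (Fin 2) ℝ) := Matrix.linftyOpNormedAlgebra
    funext k
    fin_cases k <;> simp [hv] <;> exact Pi.coe_exp _ _
  rw [hpi] at hmain
  -- extract the lower 2×2 block entries
  set E : Matrix (Fin 2) (Fin 2) ℝ := NormedSpace.exp B2 with hE
  have key : ∀ (i j : Fin 4),
      (Matrix.reindexAlgEquiv ℝ ℝ e4
        (Matrix.blockDiagonal ![NormedSpace.exp A2, NormedSpace.exp B2])) i j
      = ((↑u⁻¹ : Matrix (Fin 4) (Fin 4) ℝ) *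
          !![m11, m12, m13, m14; m21, m22, m23, m24;
             m24, m23, m22, m21; m14, m13, m12, m11] * (↑u : Matrix (Fin 4) (Fin 4) ℝ)) i j := fun i j =>
    congrFun (congrFun hmain i) j
  have e2 : e4.symm 2 = (0, 1) := by decide
  have e3 : e4.symm 3 = (1, 1) := by decide
  have h00 := key 2 2
  have h01 := key 2 3
  have h10 := key 3 2
  have h11 := key 3 3
  simp [hu, hS, hSi, Matrix.mul_apply, Matrix.vecMul, dotProduct, Fin.sum_univ_four,
    Matrix.reindexAlgEquiv_apply, Matrix.reindex_apply, Matrix.submatrix_apply,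
    e2, e3, Matrix.blockDiagonal_apply, hE] at h00 h01 h10 h11
  have hdet := det_exp_pos B2
  rw [Matrix.det_fin_two] at hdet
  rw [h00, h01, h10, h11] at hdet
  nlinarith [hdet]
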